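/- Consider the elementary link MDP with success probability p ∈ (0,1), maximum storage time m* ∈ ℕ, and a decision function d; write α(m) := d(m)(0) and ᾱ(m) := 1 − α(m) for m ∈ {−1,0,…,m*}. Then for every initial distribution of M(1) and every function f : {−1,0,…,m*} → ℝ with f(−1) = 0, the limit lim_{t→∞} F̃^{(d,d,…)}(t) exists and equals ∑_{m=0}^{m*} f(m)·s_d(m), where N_d := 1 − p(1 − ∏_{m′=0}^{m*} α(m′)) + p·ᾱ(−1)·(1 + ∑_{m=1}^{m*} ∏_{m′=0}^{m−1} α(m′)), s_d(−1) := (1 − p(1 − ∏_{m′=0}^{m*} α(m′)))/N_d, s_d(0) := p·ᾱ(−1)/N_d, and s_d(m) := p·ᾱ(−1)·(∏_{m′=0}^{m−1} α(m′))/N_d for 1 ≤ m ≤ m*. -/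

import Mathlib

open BigOperators Filter

noncomputable section

/-- Transition matrix `T⁰` of the "wait" action on the state set `{-1, 0, …, m*}`:
it fixes `-1`, sends `m` to `m+1` for `0 ≤ m ≤ m*-1`, and sends `m*` to `-1`. -/
def T0 (mstar : ℕ) : ℤ → ℤ → ℝ := fun s' s =>
  if s = -1 then (if s' = -1 then 1 else 0)
  else if s = (mstar : ℤ) then (if s' = -1 then 1 else 0)
  else if s' = s + 1 then 1 else 0

/-- Transition matrix `T¹` of the "request" action: every state goes to `-1` with
probability `1-p` and to `0` with probability `p`. -/
def T1 (p : ℝ) : ℤ → ℤ → ℝ := fun s' _ =>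
  if s' = -1 then 1 - p else if s' = 0 then p else 0

/-- The transition matrix `P^d` induced by the decision function with wait-probability
`α s = d(s)(0)` and request-probability `1 - α s = d(s)(1)`. -/
def Pd (mstar : ℕ) (p : ℝ) (α : ℤ → ℝ) : ℤ → ℤ → ℝ := fun s' s =>
  T0 mstar s' s * α s + T1 p s' s * (1 - α s)

/-- The distribution of the Markov chain `(M(t))` under the stationary policy `(d, d, …)`;
time `0` carries the initial distribution `μ0` of `M(1)`. -/
def chainDist (mstar : ℕ) (p : ℝ) (α : ℤ → ℝ) (μ0 : ℤ → ℝ) : ℕ → ℤ → ℝ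
  | 0 => μ0
  | (t + 1) => fun s' =>
      ∑ s ∈ Finset.Icc (-1 : ℤ) (mstar : ℤ), Pd mstar p α s' s * chainDist mstar p α μ0 t s

/-- The expected link value `F̃^{(d,d,…)}(t) = ∑_{m=0}^{m*} f(m) Pr[M(t) = m]`. -/
def Ftil (mstar : ℕ) (p : ℝ) (α : ℤ → ℝ) (μ0 : ℤ → ℝ) (f : ℤ → ℝ) (t : ℕ) : ℝ :=
  ∑ m ∈ Finset.Icc (0 : ℤ) (mstar : ℤ), f m * chainDist mstar p α μ0 t m

/-- `α` is a valid decision function: each `α s` is a probability. -/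
def ValidDecision (mstar : ℕ) (α : ℤ → ℝ) : Prop :=
  ∀ s ∈ Finset.Icc (-1 : ℤ) (mstar : ℤ), 0 ≤ α s ∧ α s ≤ 1

/-- `μ0` is a valid initial distribution on the state set. -/
def ValidInit (mstar : ℕ) (μ0 : ℤ → ℝ) : Prop :=
  (∀ s ∈ Finset.Icc (-1 : ℤ) (mstar : ℤ), 0 ≤ μ0 s) ∧
    ∑ s ∈ Finset.Icc (-1 : ℤ) (mstar : ℤ), μ0 s = 1

/-- The normalization constant `N_d`. -/
def Nd (mstar : ℕ) (p : ℝ) (α : ℤ → ℝ) : ℝ :=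
  1 - p * (1 - ∏ m' ∈ Finset.Icc (0 : ℤ) (mstar : ℤ), α m')
    + p * (1 - α (-1)) *
        (1 + ∑ m ∈ Finset.Icc (1 : ℤ) (mstar : ℤ), ∏ m' ∈ Finset.Icc (0 : ℤ) (m - 1), α m')

/-- The steady-state distribution `s_d`. -/
def sd (mstar : ℕ) (p : ℝ) (α : ℤ → ℝ) : ℤ → ℝ := fun m =>
  if m = -1 then
    (1 - p * (1 - ∏ m' ∈ Finset.Icc (0 : ℤ) (mstar : ℤ), α m')) / Nd mstar p α
  else if m = 0 then p * (1 - α (-1)) / Nd mstar p α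
  else p * (1 - α (-1)) * (∏ m' ∈ Finset.Icc (0 : ℤ) (m - 1), α m') / Nd mstar p α

namespace SteadyAux

open Finset

variable (mstar : ℕ) (p : ℝ) (α : ℤ → ℝ)

local notation "S" => Finset.Icc (-1 : ℤ) (mstar : ℤ)

lemma neg_one_mem : (-1 : ℤ) ∈ S := by rw [Finset.mem_Icc]; omega

lemma zero_mem : (0 : ℤ) ∈ S := by rw [Finset.mem_Icc]; omega

lemma mstar_mem : (mstar : ℤ) ∈ S := by rw [Finset.mem_Icc]; omega

lemma Pd_nonneg (hp0 : 0 ≤ p) (hp1 : p ≤ 1) {s : ℤ} (h0 : 0 ≤ α s) (h1 : α s ≤ 1) (s' : ℤ) :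
    0 ≤ Pd mstar p α s' s := by
  unfold Pd T0 T1
  split_ifs <;> nlinarith

lemma T1_colsum (s : ℤ) : ∑ s' ∈ S, T1 p s' s = 1 := by
  have h : ∀ s' ∈ S, T1 p s' s =
      (if s' = -1 then (1 - p) else 0) + (if s' = 0 then p else 0) := by
    intro s' _
    unfold T1
    split_ifs with h1 h2 <;> simp_all
  rw [Finset.sum_congr rfl h, Finset.sum_add_distrib, Finset.sum_ite_eq' S (-1 : ℤ) (fun _ => 1 - p),
    Finset.sum_ite_eq' S (0 : ℤ) (fun _ => p)]
  rw [if_pos (neg_one_mem mstar), if_pos (zero_mem mstar)]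
  ring

lemma T0_colsum {s : ℤ} (hs : s ∈ S) : ∑ s' ∈ S, T0 mstar s' s = 1 := by
  rw [Finset.mem_Icc] at hs
  by_cases h1 : s = -1
  · rw [Finset.sum_congr rfl (fun s' _ => by unfold T0; rw [if_pos h1])]
    rw [Finset.sum_ite_eq' S (-1 : ℤ) (fun _ => (1:ℝ)), if_pos (neg_one_mem mstar)]
  · by_cases h2 : s = (mstar : ℤ)
    · rw [Finset.sum_congr rfl (fun s' _ => by unfold T0; rw [if_neg h1, if_pos h2])]
      rw [Finset.sum_ite_eq' S (-1 : ℤ) (fun _ => (1:ℝ)), if_pos (neg_one_mem mstar)]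
    · rw [Finset.sum_congr rfl (fun s' _ => by unfold T0; rw [if_neg h1, if_neg h2])]
      rw [Finset.sum_ite_eq' S (s + 1 : ℤ) (fun _ => (1:ℝ)),
        if_pos (by rw [Finset.mem_Icc]; omega)]

lemma Pd_colsum {s : ℤ} (hs : s ∈ S) : ∑ s' ∈ S, Pd mstar p α s' s = 1 := by
  unfold Pd
  rw [Finset.sum_add_distrib, ← Finset.sum_mul, ← Finset.sum_mul,
    T0_colsum mstar hs, T1_colsum mstar p]
  ring

lemma chainDist_zero (μ : ℤ → ℝ) : chainDist mstar p α μ 0 = μ := rfl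

lemma chainDist_succ (μ : ℤ → ℝ) (t : ℕ) (s' : ℤ) :
    chainDist mstar p α μ (t + 1) s' = ∑ s ∈ S, Pd mstar p α s' s * chainDist mstar p α μ t s :=
  rfl

lemma chainDist_add (μ ν : ℤ → ℝ) : ∀ t s,
    chainDist mstar p α (fun u => μ u + ν u) t s
      = chainDist mstar p α μ t s + chainDist mstar p α ν t s := by
  intro t
  induction t with
  | zero => intro s; rfl
  | succ t ih =>
    intro s
    simp only [chainDist_succ, ih, mul_add, Finset.sum_add_distrib]

lemma chainDist_smul (c : ℝ) (μ : ℤ → ℝ) : ∀ t s,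
    chainDist mstar p α (fun u => c * μ u) t s = c * chainDist mstar p α μ t s := by
  intro t
  induction t with
  | zero => intro s; rfl
  | succ t ih =>
    intro s
    simp only [chainDist_succ, ih, Finset.mul_sum]
    exact Finset.sum_congr rfl fun u _ => by ring

lemma chainDist_mono (hp0 : 0 ≤ p) (hp1 : p ≤ 1) (hα : ValidDecision mstar α)
    {μ ν : ℤ → ℝ} (h : ∀ u, μ u ≤ ν u) : ∀ t s,
    chainDist mstar p α μ t s ≤ chainDist mstar p α ν t s := by
  intro t
  induction t with
  | zero => exact h
  | succ t ih =>
    intro s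
    simp only [chainDist_succ]
    refine Finset.sum_le_sum fun u hu => ?_
    have := Pd_nonneg mstar p α hp0 hp1 (hα u hu).1 (hα u hu).2 s
    exact mul_le_mul_of_nonneg_left (ih u) this

lemma chainDist_mass (μ : ℤ → ℝ) (hp0 : 0 ≤ p) : ∀ t,
    ∑ s' ∈ S, chainDist mstar p α μ t s' = ∑ s ∈ S, μ s := by
  intro t
  induction t with
  | zero => rfl
  | succ t ih =>
    rw [← ih]
    simp only [chainDist_succ]
    rw [Finset.sum_comm]
    refine Finset.sum_congr rfl fun s hs => ?_
    rw [← Finset.sum_mul, Pd_colsum mstar p α hs, one_mul]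

lemma chainDist_shift (μ : ℤ → ℝ) : ∀ t s,
    chainDist mstar p α μ (t + 1) s
      = chainDist mstar p α (fun s'' => ∑ u ∈ S, Pd mstar p α s'' u * μ u) t s := by
  intro t
  induction t with
  | zero => intro s; rfl
  | succ t ih =>
    intro s
    rw [chainDist_succ, chainDist_succ]
    exact Finset.sum_congr rfl fun u _ => by rw [ih]

lemma chainDist_semigroup (μ : ℤ → ℝ) : ∀ a b s,
    chainDist mstar p α μ (a + b) s
      = chainDist mstar p α (fun u => chainDist mstar p α μ b u) a s := by
  intro a
  induction a with
  | zero => intro b s; simp [chainDist_zero]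
  | succ a ih =>
    intro b s
    have : a + 1 + b = (a + b) + 1 := by omega
    rw [this, chainDist_succ, chainDist_succ]
    exact Finset.sum_congr rfl fun u _ => by rw [ih]

lemma chainDist_decomp (ν : ℤ → ℝ) : ∀ t, ∀ s' ∈ S,
    chainDist mstar p α ν t s'
      = ∑ s ∈ S, ν s * chainDist mstar p α (fun u => if u = s then 1 else 0) t s' := by
  intro t
  induction t with
  | zero =>
    intro s' hs'
    simp only [chainDist_zero]
    rw [Finset.sum_congr rfl (fun s _ => by rw [mul_ite, mul_one, mul_zero]),
      Finset.sum_ite_eq S s' ν, if_pos hs']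
  | succ t ih =>
    intro s' _
    simp only [chainDist_succ]
    rw [Finset.sum_congr rfl fun u hu => by rw [ih u hu, Finset.mul_sum]]
    rw [Finset.sum_comm]
    refine Finset.sum_congr rfl fun s _ => ?_
    rw [Finset.mul_sum]
    exact Finset.sum_congr rfl fun u _ => by ring

lemma chainDist_nonneg (hp0 : 0 ≤ p) (hp1 : p ≤ 1) (hα : ValidDecision mstar α)
    {μ : ℤ → ℝ} (h : ∀ u, 0 ≤ μ u) (t : ℕ) (s : ℤ) : 0 ≤ chainDist mstar p α μ t s := by
  have h0 : chainDist mstar p α (fun _ => (0:ℝ)) t s = 0 := by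
    have := chainDist_smul mstar p α 0 μ t s
    simpa using this
  calc (0:ℝ) = chainDist mstar p α (fun _ => (0:ℝ)) t s := h0.symm
    _ ≤ chainDist mstar p α μ t s := chainDist_mono mstar p α hp0 hp1 hα h t s

/-- From any state, after `mstar+1` steps, the chain is at `-1` with probability
at least `(1-p)^(mstar+1)` (Doeblin minorization). -/
lemma reach (hp0 : 0 ≤ p) (hp1 : p ≤ 1) (hα : ValidDecision mstar α) :
    ∀ t : ℕ, ∀ s : ℤ, -1 ≤ s → s ≤ (mstar : ℤ) →
      (s = -1 ∨ (mstar : ℤ) + 1 - s ≤ (t : ℤ)) →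
      (1 - p) ^ t ≤ chainDist mstar p α (fun u => if u = s then 1 else 0) t (-1) := by
  intro t
  induction t with
  | zero =>
    intro s h1 h2 h3
    have hs : s = -1 := by omega
    subst hs
    simp [chainDist_zero]
  | succ t ih =>
    intro s h1 h2 h3
    have hsS : s ∈ S := by rw [Finset.mem_Icc]; omega
    have hα1 := (hα s hsS).1
    have hα2 := (hα s hsS).2
    have hpow : (0:ℝ) ≤ (1 - p) ^ t := pow_nonneg (by linarith) t
    have hps : (1 - p) ^ (t + 1) = (1 - p) ^ t * (1 - p) := pow_succ _ _
    -- one step of the chain started at δ_s gives the column Pd · s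
    have hstep : chainDist mstar p α (fun u => if u = s then 1 else 0) (t + 1) (-1)
        = chainDist mstar p α (fun s'' => Pd mstar p α s'' s) t (-1) := by
      rw [chainDist_shift]
      congr 1
      funext s''
      rw [Finset.sum_congr rfl (fun u _ => by rw [mul_ite, mul_one, mul_zero]),
        Finset.sum_ite_eq' S s (fun u => Pd mstar p α s'' u), if_pos hsS]
    rw [hstep]
    by_cases hcase : s = -1 ∨ s = (mstar : ℤ)
    · -- lower bound by (α s + (1 - α s) * (1-p)) · δ_{-1}
      set β : ℝ := α s + (1 - α s) * (1 - p) with hβ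
      have hβ0 : 0 ≤ β := by nlinarith
      have hβp : 1 - p ≤ β := by nlinarith
      have hlow : ∀ u, β * (if u = -1 then (1:ℝ) else 0) ≤ Pd mstar p α u s := by
        intro u
        by_cases hu : u = -1
        · subst hu
          have : Pd mstar p α (-1) s = β := by
            unfold Pd T0 T1
            rcases hcase with h | h <;> subst h <;> simp <;> ring_nf <;> try omega
            all_goals (rw [hβ]; ring)
          rw [this]; simp
        · rw [if_neg hu, mul_zero]
          exact Pd_nonneg mstar p α hp0 hp1 hα1 hα2 u
      calc (1 - p) ^ (t + 1) = (1 - p) * (1 - p) ^ t := by ring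
        _ ≤ β * (1 - p) ^ t := by nlinarith
        _ ≤ β * chainDist mstar p α (fun u => if u = -1 then 1 else 0) t (-1) := by
            have := ih (-1) (by omega) (by omega) (Or.inl rfl)
            nlinarith
        _ = chainDist mstar p α (fun u => β * (if u = -1 then 1 else 0)) t (-1) :=
            (chainDist_smul mstar p α β _ t (-1)).symm
        _ ≤ chainDist mstar p α (fun s'' => Pd mstar p α s'' s) t (-1) :=
            chainDist_mono mstar p α hp0 hp1 hα hlow t (-1)
    · -- middle state: 0 ≤ s ≤ mstar - 1
      push_neg at hcase
      obtain ⟨hne1, hnem⟩ := hcase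
      have hs0 : 0 ≤ s := by omega
      have hsm : s + 1 ≤ (mstar : ℤ) := by omega
      have hlow : ∀ u,
          α s * (if u = s + 1 then (1:ℝ) else 0) + (1 - α s) * (1 - p) * (if u = -1 then 1 else 0)
            ≤ Pd mstar p α u s := by
        intro u
        by_cases hu1 : u = s + 1
        · subst hu1
          have h1' : ¬ (s + 1 = -1) := by omega
          have : Pd mstar p α (s+1) s = α s + T1 p (s+1) s * (1 - α s) := by
            unfold Pd T0
            rw [if_neg hne1, if_neg hnem, if_pos rfl, one_mul]
          rw [this, if_pos rfl, if_neg h1', mul_one, mul_zero, add_zero]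
          have : 0 ≤ T1 p (s+1) s := by unfold T1; split_ifs <;> linarith
          nlinarith
        · by_cases hu2 : u = -1
          · subst hu2
            have : Pd mstar p α (-1) s = (1 - p) * (1 - α s) := by
              unfold Pd T0 T1
              rw [if_neg hne1, if_neg hnem, if_neg (by omega : ¬ (-1 : ℤ) = s + 1),
                if_pos rfl]
              ring
            rw [this, if_neg (by omega : ¬ (-1 : ℤ) = s + 1), if_pos rfl]
            ring_nf
            nlinarith
          · rw [if_neg hu1, if_neg hu2, mul_zero, mul_zero, add_zero]
            exact Pd_nonneg mstar p α hp0 hp1 hα1 hα2 u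
      have ihs1 : (1 - p) ^ t ≤ chainDist mstar p α (fun u => if u = s + 1 then 1 else 0) t (-1) := by
        refine ih (s + 1) (by omega) hsm ?_
        right; omega
      have ihm1 : (1 - p) ^ t ≤ chainDist mstar p α (fun u => if u = -1 then 1 else 0) t (-1) :=
        ih (-1) (by omega) (by omega) (Or.inl rfl)
      have key : chainDist mstar p α
          (fun u => α s * (if u = s + 1 then (1:ℝ) else 0)
            + (1 - α s) * (1 - p) * (if u = -1 then 1 else 0)) t (-1)
          = α s * chainDist mstar p α (fun u => if u = s + 1 then 1 else 0) t (-1)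
            + (1 - α s) * (1 - p) * chainDist mstar p α (fun u => if u = -1 then 1 else 0) t (-1) := by
        rw [chainDist_add mstar p α _ _ t (-1), chainDist_smul mstar p α _ _ t (-1),
          chainDist_smul mstar p α _ _ t (-1)]
      calc (1 - p) ^ (t + 1)
          ≤ α s * (1 - p) ^ t + (1 - α s) * (1 - p) * (1 - p) ^ t := by
            nlinarith [mul_nonneg (mul_nonneg hα1 hpow) hp0]
        _ ≤ α s * chainDist mstar p α (fun u => if u = s + 1 then 1 else 0) t (-1)
            + (1 - α s) * (1 - p) * chainDist mstar p α (fun u => if u = -1 then 1 else 0) t (-1) := by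
            have h1 : 0 ≤ (1 - α s) * (1 - p) := by nlinarith
            nlinarith
        _ = chainDist mstar p α
            (fun u => α s * (if u = s + 1 then (1:ℝ) else 0)
              + (1 - α s) * (1 - p) * (if u = -1 then 1 else 0)) t (-1) := key.symm
        _ ≤ chainDist mstar p α (fun s'' => Pd mstar p α s'' s) t (-1) :=
            chainDist_mono mstar p α hp0 hp1 hα hlow t (-1)

lemma doeblin (hp0 : 0 ≤ p) (hp1 : p ≤ 1) (hα : ValidDecision mstar α) {s : ℤ} (hs : s ∈ S) :
    (1 - p) ^ (mstar + 1)
      ≤ chainDist mstar p α (fun u => if u = s then 1 else 0) (mstar + 1) (-1) := by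
  rw [Finset.mem_Icc] at hs
  refine reach mstar p α hp0 hp1 hα (mstar + 1) s hs.1 hs.2 ?_
  rcases eq_or_lt_of_le hs.1 with h | h
  · exact Or.inl h.symm
  · right; push_cast; omega

lemma nonexpansive (hp0 : 0 ≤ p) (hp1 : p ≤ 1) (hα : ValidDecision mstar α) (ν : ℤ → ℝ) (t : ℕ) :
    ∑ s' ∈ S, |chainDist mstar p α ν (t + 1) s'| ≤ ∑ s ∈ S, |chainDist mstar p α ν t s| := by
  calc ∑ s' ∈ S, |chainDist mstar p α ν (t + 1) s'|
      ≤ ∑ s' ∈ S, ∑ s ∈ S, Pd mstar p α s' s * |chainDist mstar p α ν t s| := by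
        refine Finset.sum_le_sum fun s' _ => ?_
        rw [chainDist_succ]
        refine (Finset.abs_sum_le_sum_abs _ _).trans ?_
        refine Finset.sum_le_sum fun s hs => ?_
        rw [abs_mul, abs_of_nonneg (Pd_nonneg mstar p α hp0 hp1 (hα s hs).1 (hα s hs).2 s')]
    _ = ∑ s ∈ S, |chainDist mstar p α ν t s| := by
        rw [Finset.sum_comm]
        refine Finset.sum_congr rfl fun s hs => ?_
        rw [← Finset.sum_mul, Pd_colsum mstar p α hs, one_mul]

lemma contraction (hp0 : 0 ≤ p) (hp1 : p ≤ 1) (hα : ValidDecision mstar α)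
    (ν : ℤ → ℝ) (hmass : ∑ s ∈ S, ν s = 0) :
    ∑ s' ∈ S, |chainDist mstar p α ν (mstar + 1) s'|
      ≤ (1 - (1 - p) ^ (mstar + 1)) * ∑ s ∈ S, |ν s| := by
  set k := mstar + 1 with hk
  set δ : ℝ := (1 - p) ^ k with hδ
  set K : ℤ → ℤ → ℝ := fun s' s => chainDist mstar p α (fun u => if u = s then 1 else 0) k s'
    with hK
  have hKnn : ∀ s' : ℤ, ∀ s : ℤ, 0 ≤ K s' s := fun s' s =>
    chainDist_nonneg mstar p α hp0 hp1 hα (fun u => by positivity) k s'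
  have hKcol : ∀ s ∈ S, ∑ s' ∈ S, K s' s = 1 := by
    intro s hs
    rw [hK]
    rw [chainDist_mass mstar p α _ hp0 k]
    rw [Finset.sum_ite_eq' S s (fun _ => (1:ℝ)), if_pos hs]
  have hQnn : ∀ s' ∈ S, ∀ s ∈ S, 0 ≤ K s' s - (if s' = -1 then δ else 0) := by
    intro s' _ s hs
    by_cases h : s' = -1
    · subst h
      rw [if_pos rfl]
      have := doeblin mstar p α hp0 hp1 hα hs
      rw [hK]; dsimp only; linarith [this]
    · rw [if_neg h, sub_zero]; exact hKnn s' s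
  have hQcol : ∀ s ∈ S, ∑ s' ∈ S, (K s' s - (if s' = -1 then δ else 0)) = 1 - δ := by
    intro s hs
    rw [Finset.sum_sub_distrib, hKcol s hs,
      Finset.sum_ite_eq' S (-1:ℤ) (fun _ => δ), if_pos (neg_one_mem mstar)]
  have hdec : ∀ s' ∈ S, chainDist mstar p α ν k s'
      = ∑ s ∈ S, ν s * (K s' s - (if s' = -1 then δ else 0)) := by
    intro s' hs'
    rw [chainDist_decomp mstar p α ν k s' hs']
    have h2 : ∑ s ∈ S, ν s * (K s' s - (if s' = -1 then δ else 0))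
        = ∑ s ∈ S, ν s * K s' s := by
      rw [Finset.sum_congr rfl (fun s _ => mul_sub (ν s) _ _), Finset.sum_sub_distrib,
        ← Finset.sum_mul, hmass, zero_mul, sub_zero]
    rw [h2]
  calc ∑ s' ∈ S, |chainDist mstar p α ν k s'|
      ≤ ∑ s' ∈ S, ∑ s ∈ S, |ν s| * (K s' s - (if s' = -1 then δ else 0)) := by
        refine Finset.sum_le_sum fun s' hs' => ?_
        rw [hdec s' hs']
        refine (Finset.abs_sum_le_sum_abs _ _).trans ?_
        refine Finset.sum_le_sum fun s hs => ?_
        rw [abs_mul, abs_of_nonneg (hQnn s' hs' s hs)]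
    _ = ∑ s ∈ S, |ν s| * (1 - δ) := by
        rw [Finset.sum_comm]
        refine Finset.sum_congr rfl fun s hs => ?_
        rw [← Finset.mul_sum, hQcol s hs]
    _ = (1 - δ) * ∑ s ∈ S, |ν s| := by rw [← Finset.sum_mul]; ring

/-- partial product `c m = ∏_{m'=0}^{m-1} α m'`. -/
def cprod (α : ℤ → ℝ) (m : ℤ) : ℝ := ∏ m' ∈ Finset.Icc (0:ℤ) (m-1), α m'

lemma cprod_zero : cprod α 0 = 1 := by
  unfold cprod
  rw [Finset.Icc_eq_empty (by norm_num : ¬ (0:ℤ) ≤ 0 - 1), Finset.prod_empty]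

lemma cprod_succ (m : ℤ) (hm : 0 ≤ m) : cprod α (m + 1) = cprod α m * α m := by
  unfold cprod
  have h : Finset.Icc (0:ℤ) (m + 1 - 1) = insert m (Finset.Icc (0:ℤ) (m-1)) := by
    ext x
    simp only [Finset.mem_Icc, Finset.mem_insert]
    omega
  rw [h, Finset.prod_insert (by rw [Finset.mem_Icc]; omega)]
  ring

lemma cprod_top : cprod α ((mstar : ℤ) + 1) = ∏ m' ∈ Finset.Icc (0:ℤ) (mstar : ℤ), α m' := by
  unfold cprod
  norm_num

lemma S_split : S = insert (-1 : ℤ) (Finset.Icc (0:ℤ) (mstar : ℤ)) := by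
  ext x
  simp only [Finset.mem_Icc, Finset.mem_insert]
  omega

lemma neg_one_notmem : (-1 : ℤ) ∉ Finset.Icc (0:ℤ) (mstar : ℤ) := by
  rw [Finset.mem_Icc]; omega

lemma Icc0_split : Finset.Icc (0:ℤ) (mstar : ℤ) = insert (0:ℤ) (Finset.Icc (1:ℤ) (mstar : ℤ)) := by
  ext x
  simp only [Finset.mem_Icc, Finset.mem_insert]
  omega

lemma zero_notmem : (0 : ℤ) ∉ Finset.Icc (1:ℤ) (mstar : ℤ) := by
  rw [Finset.mem_Icc]; omega

lemma sum_c : ∑ m ∈ Finset.Icc (0:ℤ) (mstar : ℤ), cprod α m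
    = 1 + ∑ m ∈ Finset.Icc (1:ℤ) (mstar : ℤ), cprod α m := by
  rw [Icc0_split, Finset.sum_insert (zero_notmem mstar), cprod_zero]

lemma sum_ac : ∑ m ∈ Finset.Icc (0:ℤ) (mstar : ℤ), α m * cprod α m
    = (∑ m ∈ Finset.Icc (1:ℤ) (mstar : ℤ), cprod α m)
      + ∏ m' ∈ Finset.Icc (0:ℤ) (mstar : ℤ), α m' := by
  have h1 : ∀ m ∈ Finset.Icc (0:ℤ) (mstar : ℤ), α m * cprod α m = cprod α (m + 1) := by
    intro m hm
    rw [Finset.mem_Icc] at hm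
    rw [cprod_succ α m hm.1]; ring
  rw [Finset.sum_congr rfl h1]
  have h2 : ∑ m ∈ Finset.Icc (0:ℤ) (mstar : ℤ), cprod α (m + 1)
      = ∑ m ∈ Finset.Icc (1:ℤ) ((mstar : ℤ) + 1), cprod α m := by
    have hmap : Finset.Icc (1:ℤ) ((mstar : ℤ) + 1)
        = (Finset.Icc (0:ℤ) (mstar : ℤ)).map (addRightEmbedding 1) := by
      rw [Finset.map_add_right_Icc]; norm_num
    rw [hmap, Finset.sum_map]
    simp [addRightEmbedding_apply]
  rw [h2]
  have h3 : Finset.Icc (1:ℤ) ((mstar : ℤ) + 1)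
      = insert ((mstar : ℤ) + 1) (Finset.Icc (1:ℤ) (mstar : ℤ)) := by
    ext x
    simp only [Finset.mem_Icc, Finset.mem_insert]
    omega
  rw [h3, Finset.sum_insert (by rw [Finset.mem_Icc]; omega), cprod_top]
  ring

lemma alpha_bounds (hα : ValidDecision mstar α) :
    (0 ≤ ∏ m' ∈ Finset.Icc (0:ℤ) (mstar : ℤ), α m')
    ∧ (∏ m' ∈ Finset.Icc (0:ℤ) (mstar : ℤ), α m' ≤ 1)
    ∧ (0 ≤ ∑ m ∈ Finset.Icc (1:ℤ) (mstar : ℤ), cprod α m)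
    ∧ 0 ≤ 1 - α (-1) := by
  have hsub : ∀ m' ∈ Finset.Icc (0:ℤ) (mstar : ℤ), 0 ≤ α m' ∧ α m' ≤ 1 := by
    intro m' hm'
    rw [Finset.mem_Icc] at hm'
    exact hα m' (by rw [Finset.mem_Icc]; omega)
  refine ⟨Finset.prod_nonneg fun i hi => (hsub i hi).1,
    Finset.prod_le_one (fun i hi => (hsub i hi).1) (fun i hi => (hsub i hi).2),
    Finset.sum_nonneg fun m hm => ?_, ?_⟩
  · rw [Finset.mem_Icc] at hm
    refine Finset.prod_nonneg fun i hi => ?_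
    rw [Finset.mem_Icc] at hi
    exact (hα i (by rw [Finset.mem_Icc]; omega)).1
  · linarith [(hα (-1) (neg_one_mem mstar)).2]

lemma Nd_pos (hp0 : 0 ≤ p) (hp1 : p < 1) (hα : ValidDecision mstar α) : 0 < Nd mstar p α := by
  obtain ⟨h1, h2, h3, h4⟩ := alpha_bounds mstar α hα
  unfold Nd
  unfold cprod at h3
  nlinarith [mul_nonneg hp0 h1,
    mul_nonneg (mul_nonneg hp0 h4)
      (by linarith : (0:ℝ) ≤ 1 + ∑ m ∈ Finset.Icc (1:ℤ) (mstar : ℤ), ∏ m' ∈ Finset.Icc (0:ℤ) (m-1), α m')]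

lemma sd_on (m : ℤ) (hm : 0 ≤ m) :
    sd mstar p α m = p * (1 - α (-1)) * cprod α m / Nd mstar p α := by
  unfold sd
  by_cases h0 : m = 0
  · subst h0
    rw [if_neg (by norm_num), if_pos rfl, cprod_zero, mul_one]
  · rw [if_neg (by omega), if_neg h0]
    rfl

lemma sd_mass (hp0 : 0 ≤ p) (hp1 : p < 1) (hα : ValidDecision mstar α) :
    ∑ s ∈ S, sd mstar p α s = 1 := by
  have hN := Nd_pos mstar p α hp0 hp1 hα
  rw [S_split, Finset.sum_insert (neg_one_notmem mstar)]
  have h1 : ∀ m ∈ Finset.Icc (0:ℤ) (mstar : ℤ),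
      sd mstar p α m = p * (1 - α (-1)) * cprod α m / Nd mstar p α := by
    intro m hm
    rw [Finset.mem_Icc] at hm
    exact sd_on mstar p α m hm.1
  rw [Finset.sum_congr rfl h1]
  have h2 : ∑ m ∈ Finset.Icc (0:ℤ) (mstar : ℤ), p * (1 - α (-1)) * cprod α m / Nd mstar p α
      = p * (1 - α (-1)) * (∑ m ∈ Finset.Icc (0:ℤ) (mstar : ℤ), cprod α m) / Nd mstar p α := by
    rw [Finset.mul_sum, Finset.sum_div]
  rw [h2, sum_c]
  have hsd1 : sd mstar p α (-1)
      = (1 - p * (1 - ∏ m' ∈ Finset.Icc (0:ℤ) (mstar : ℤ), α m')) / Nd mstar p α := by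
    simp only [sd]; norm_num
  rw [hsd1]
  unfold Nd cprod
  field_simp
  exact div_self (ne_of_gt (by unfold Nd at hN; linarith))

lemma B_eq (hp0 : 0 ≤ p) (hp1 : p < 1) (hα : ValidDecision mstar α) :
    ∑ s ∈ S, (1 - α s) * sd mstar p α s = (1 - α (-1)) / Nd mstar p α := by
  have hN := Nd_pos mstar p α hp0 hp1 hα
  rw [S_split, Finset.sum_insert (neg_one_notmem mstar)]
  have h1 : ∀ m ∈ Finset.Icc (0:ℤ) (mstar : ℤ),
      (1 - α m) * sd mstar p α m
        = (p * (1 - α (-1)) * cprod α m - p * (1 - α (-1)) * (α m * cprod α m)) / Nd mstar p α := by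
    intro m hm
    rw [Finset.mem_Icc] at hm
    rw [sd_on mstar p α m hm.1]
    field_simp
  rw [Finset.sum_congr rfl h1]
  rw [← Finset.sum_div, Finset.sum_sub_distrib, ← Finset.mul_sum, ← Finset.mul_sum,
    sum_c, sum_ac]
  have hsd1 : sd mstar p α (-1)
      = (1 - p * (1 - ∏ m' ∈ Finset.Icc (0:ℤ) (mstar : ℤ), α m')) / Nd mstar p α := by
    simp only [sd]; norm_num
  rw [hsd1]
  unfold Nd cprod
  field_simp
  ring

lemma sd_stationary (hp0 : 0 ≤ p) (hp1 : p < 1) (hα : ValidDecision mstar α) :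
    ∀ s' ∈ S, ∑ s ∈ S, Pd mstar p α s' s * sd mstar p α s = sd mstar p α s' := by
  intro s' hs'
  have hN := Nd_pos mstar p α hp0 hp1 hα
  have hN' : Nd mstar p α ≠ 0 := ne_of_gt hN
  have hsplit : ∀ s ∈ S, Pd mstar p α s' s * sd mstar p α s
      = T0 mstar s' s * (α s * sd mstar p α s)
        + (if s' = -1 then 1 - p else if s' = 0 then p else 0)
            * ((1 - α s) * sd mstar p α s) := by
    intro s _
    unfold Pd T1
    ring
  rw [Finset.sum_congr rfl hsplit, Finset.sum_add_distrib, ← Finset.mul_sum,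
    B_eq mstar p α hp0 hp1 hα]
  rw [Finset.mem_Icc] at hs'
  by_cases h1 : s' = -1
  · subst h1
    have hT : ∀ s ∈ S, T0 mstar (-1) s * (α s * sd mstar p α s)
        = (if s = -1 then α (-1) * sd mstar p α (-1) else 0)
          + (if s = (mstar:ℤ) then α (mstar:ℤ) * sd mstar p α (mstar:ℤ) else 0) := by
      intro s hs
      rw [Finset.mem_Icc] at hs
      unfold T0
      by_cases hA : s = -1
      · subst hA
        rw [if_pos rfl, if_pos rfl, if_pos rfl, if_neg (by omega : ¬ (-1:ℤ) = (mstar:ℤ)),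
          one_mul, add_zero]
      · rw [if_neg hA, if_neg hA]
        by_cases hB : s = (mstar:ℤ)
        · subst hB
          rw [if_pos rfl, if_pos rfl, if_pos rfl, one_mul, zero_add]
        · rw [if_neg hB, if_neg hB, if_neg (by omega : ¬ (-1:ℤ) = s + 1), zero_mul, add_zero]
    rw [Finset.sum_congr rfl hT, Finset.sum_add_distrib,
      Finset.sum_ite_eq' S (-1:ℤ) (fun _ => α (-1) * sd mstar p α (-1)),
      Finset.sum_ite_eq' S ((mstar:ℤ)) (fun _ => α (mstar:ℤ) * sd mstar p α (mstar:ℤ)),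
      if_pos (neg_one_mem mstar), if_pos (mstar_mem mstar), if_pos rfl]
    have e1 : sd mstar p α (-1)
        = (1 - p * (1 - ∏ m' ∈ Finset.Icc (0:ℤ) (mstar : ℤ), α m')) / Nd mstar p α := by
      simp only [sd]; norm_num
    have e2 : α (mstar:ℤ) * sd mstar p α (mstar:ℤ)
        = p * (1 - α (-1)) * (∏ m' ∈ Finset.Icc (0:ℤ) (mstar : ℤ), α m') / Nd mstar p α := by
      rw [sd_on mstar p α (mstar:ℤ) (by positivity)]
      rw [← cprod_top mstar α, cprod_succ α (mstar:ℤ) (by positivity)]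
      ring
    rw [e1, e2]
    field_simp
    ring
  · by_cases h2 : s' = 0
    · subst h2
      have hT : ∀ s ∈ S, T0 mstar 0 s * (α s * sd mstar p α s) = 0 := by
        intro s hs
        rw [Finset.mem_Icc] at hs
        unfold T0
        by_cases hA : s = -1
        · rw [if_pos hA, if_neg (by omega : ¬ (0:ℤ) = -1), zero_mul]
        · rw [if_neg hA]
          by_cases hB : s = (mstar:ℤ)
          · rw [if_pos hB, if_neg (by omega : ¬ (0:ℤ) = -1), zero_mul]
          · rw [if_neg hB, if_neg (by omega : ¬ (0:ℤ) = s + 1), zero_mul]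
      rw [Finset.sum_congr rfl hT, Finset.sum_const_zero, zero_add,
        if_neg (by omega : ¬ (0:ℤ) = -1), if_pos rfl]
      have e0 : sd mstar p α 0 = p * (1 - α (-1)) / Nd mstar p α := by
        simp only [sd]; norm_num
      rw [e0]
      ring
    · -- 1 ≤ s' ≤ mstar
      have hs1 : 1 ≤ s' := by omega
      have hT : ∀ s ∈ S, T0 mstar s' s * (α s * sd mstar p α s)
          = if s = s' - 1 then α (s' - 1) * sd mstar p α (s' - 1) else 0 := by
        intro s hs
        rw [Finset.mem_Icc] at hs
        unfold T0
        by_cases hA : s = -1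
        · rw [if_pos hA, if_neg h1, zero_mul, if_neg (by omega : ¬ s = s' - 1)]
        · rw [if_neg hA]
          by_cases hB : s = (mstar:ℤ)
          · rw [if_pos hB, if_neg h1, zero_mul, if_neg (by omega : ¬ s = s' - 1)]
          · rw [if_neg hB]
            by_cases hC : s = s' - 1
            · rw [if_pos (by omega : s' = s + 1), if_pos hC, one_mul, hC]
            · rw [if_neg (by omega : ¬ s' = s + 1), if_neg hC, zero_mul]
      rw [Finset.sum_congr rfl hT,
        Finset.sum_ite_eq' S (s' - 1) (fun _ => α (s' - 1) * sd mstar p α (s' - 1)),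
        if_pos (by rw [Finset.mem_Icc]; omega),
        if_neg h1, if_neg h2, zero_mul, add_zero]
      rw [sd_on mstar p α (s' - 1) (by omega), sd_on mstar p α s' (by omega)]
      have hc : cprod α s' = cprod α (s' - 1) * α (s' - 1) := by
        have := cprod_succ α (s' - 1) (by omega)
        rw [show s' - 1 + 1 = s' by ring] at this
        exact this
      rw [hc]
      ring

lemma chainDist_sd (hp0 : 0 ≤ p) (hp1 : p < 1) (hα : ValidDecision mstar α) :
    ∀ t, ∀ s ∈ S, chainDist mstar p α (sd mstar p α) t s = sd mstar p α s := by
  intro t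
  induction t with
  | zero => intro s _; rfl
  | succ t ih =>
    intro s' hs'
    rw [chainDist_succ, Finset.sum_congr rfl (fun u hu => by rw [ih u hu]),
      sd_stationary mstar p α hp0 hp1 hα s' hs']

end SteadyAux

/-- **Steady-state expected value of an elementary link** (Theorem 2 of the paper):
under any stationary policy `(d, d, …)`, for any initial distribution, the limit
`lim_{t→∞} F̃^{(d,d,…)}(t)` exists and equals `∑_{m=0}^{m*} f(m) s_d(m)`. -/
theorem steady_state_expected_value (mstar : ℕ) (p : ℝ) (hp0 : 0 < p) (hp1 : p < 1)
    (α : ℤ → ℝ) (hα : ValidDecision mstar α)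
    (μ0 : ℤ → ℝ) (hμ0 : ValidInit mstar μ0)
    (f : ℤ → ℝ) (hf : f (-1) = 0) :
    Tendsto (Ftil mstar p α μ0 f) atTop
      (nhds (∑ m ∈ Finset.Icc (0 : ℤ) (mstar : ℤ), f m * sd mstar p α m)) := by
  have hple : 0 ≤ p := hp0.le
  have hp1' : p ≤ 1 := hp1.le
  set T : ℝ := ∑ m ∈ Finset.Icc (0 : ℤ) (mstar : ℤ), f m * sd mstar p α m with hT
  set ν : ℤ → ℝ := fun u => μ0 u - sd mstar p α u with hν
  set δ : ℝ := (1 - p) ^ (mstar + 1) with hδ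
  have hδpos : 0 < δ := pow_pos (by linarith) _
  have hδle : δ ≤ 1 := pow_le_one₀ (by linarith) (by linarith)
  have hdiff : ∀ t, ∀ s ∈ Finset.Icc (-1 : ℤ) (mstar : ℤ),
      chainDist mstar p α μ0 t s - sd mstar p α s = chainDist mstar p α ν t s := by
    intro t s hs
    have hadd := SteadyAux.chainDist_add mstar p α ν (sd mstar p α) t s
    have hfun : (fun u => ν u + sd mstar p α u) = μ0 := by
      funext u; simp [hν]
    rw [hfun] at hadd
    rw [hadd, SteadyAux.chainDist_sd mstar p α hple hp1 hα t s hs]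
    ring
  set g : ℕ → ℝ := fun t => ∑ s ∈ Finset.Icc (-1 : ℤ) (mstar : ℤ), |chainDist mstar p α ν t s|
    with hg
  have hganti : ∀ t, g (t + 1) ≤ g t := fun t =>
    SteadyAux.nonexpansive mstar p α hple hp1' hα ν t
  have hgnn : ∀ t, 0 ≤ g t := fun t => Finset.sum_nonneg fun s _ => abs_nonneg _
  have hmass : ∀ t, ∑ s ∈ Finset.Icc (-1 : ℤ) (mstar : ℤ), chainDist mstar p α ν t s = 0 := by
    intro t
    rw [SteadyAux.chainDist_mass mstar p α ν hple t]
    have h1 := hμ0.2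
    have h2 := SteadyAux.sd_mass mstar p α hple hp1 hα
    simp only [hν]
    rw [Finset.sum_sub_distrib, h1, h2, sub_self]
  have hcontr : ∀ t, g ((mstar + 1) + t) ≤ (1 - δ) * g t := by
    intro t
    have hsg := SteadyAux.chainDist_semigroup mstar p α ν (mstar + 1) t
    calc g ((mstar + 1) + t)
        = ∑ s ∈ Finset.Icc (-1 : ℤ) (mstar : ℤ),
            |chainDist mstar p α (fun u => chainDist mstar p α ν t u) (mstar + 1) s| := by
          exact Finset.sum_congr rfl fun s _ => by rw [hsg s]
      _ ≤ (1 - δ) * ∑ s ∈ Finset.Icc (-1 : ℤ) (mstar : ℤ), |chainDist mstar p α ν t s| :=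
          SteadyAux.contraction mstar p α hple hp1' hα _ (hmass t)
      _ = (1 - δ) * g t := rfl
  have hgeom : ∀ n : ℕ, g (n * (mstar + 1)) ≤ (1 - δ) ^ n * g 0 := by
    intro n
    induction n with
    | zero => simp
    | succ n ih =>
      have he : (n + 1) * (mstar + 1) = (mstar + 1) + n * (mstar + 1) := by ring
      rw [he]
      calc g ((mstar + 1) + n * (mstar + 1)) ≤ (1 - δ) * g (n * (mstar + 1)) := hcontr _
        _ ≤ (1 - δ) * ((1 - δ) ^ n * g 0) := by
            have h0 : (0:ℝ) ≤ 1 - δ := by linarith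
            nlinarith
        _ = (1 - δ) ^ (n + 1) * g 0 := by ring
  have hAnti : Antitone g := antitone_nat_of_succ_le hganti
  have hBdd : BddBelow (Set.range g) := ⟨0, fun x ⟨t, ht⟩ => ht ▸ hgnn t⟩
  have hginf : Tendsto g atTop (nhds (⨅ t, g t)) := tendsto_atTop_ciInf hAnti hBdd
  have hL0 : (⨅ t, g t) = 0 := by
    have hle : ∀ n : ℕ, (⨅ t, g t) ≤ (1 - δ) ^ n * g 0 := fun n =>
      le_trans (ciInf_le hBdd (n * (mstar + 1))) (hgeom n)
    have htd : Tendsto (fun n : ℕ => (1 - δ) ^ n * g 0) atTop (nhds 0) := by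
      have h := tendsto_pow_atTop_nhds_zero_of_lt_one (by linarith : (0:ℝ) ≤ 1 - δ)
        (by linarith : 1 - δ < 1)
      simpa using h.mul_const (g 0)
    have h1 : (⨅ t, g t) ≤ 0 := ge_of_tendsto htd (Filter.Eventually.of_forall hle)
    have h2 : 0 ≤ ⨅ t, g t := le_ciInf hgnn
    linarith
  rw [hL0] at hginf
  have hsub : ∀ m ∈ Finset.Icc (0 : ℤ) (mstar : ℤ), m ∈ Finset.Icc (-1 : ℤ) (mstar : ℤ) := by
    intro m hm
    rw [Finset.mem_Icc] at hm ⊢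
    omega
  set C : ℝ := ∑ m ∈ Finset.Icc (0 : ℤ) (mstar : ℤ), |f m| with hC
  have hbound : ∀ t, |Ftil mstar p α μ0 f t - T| ≤ C * g t := by
    intro t
    have he : Ftil mstar p α μ0 f t - T
        = ∑ m ∈ Finset.Icc (0 : ℤ) (mstar : ℤ),
            f m * (chainDist mstar p α μ0 t m - sd mstar p α m) := by
      rw [hT]
      unfold Ftil
      rw [← Finset.sum_sub_distrib]
      exact Finset.sum_congr rfl fun m _ => by ring
    rw [he]
    refine (Finset.abs_sum_le_sum_abs _ _).trans ?_
    rw [hC, Finset.sum_mul]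
    refine Finset.sum_le_sum fun m hm => ?_
    rw [abs_mul, hdiff t m (hsub m hm)]
    refine mul_le_mul_of_nonneg_left ?_ (abs_nonneg _)
    exact Finset.single_le_sum (f := fun s => |chainDist mstar p α ν t s|)
      (fun i _ => abs_nonneg _) (hsub m hm)
  have hCg : Tendsto (fun t => C * g t) atTop (nhds 0) := by
    simpa using hginf.const_mul C
  have hzero : Tendsto (fun t => Ftil mstar p α μ0 f t - T) atTop (nhds 0) :=
    squeeze_zero_norm (fun t => by rw [Real.norm_eq_abs]; exact hbound t) hCg
  have := hzero.add_const T
  simpa using this
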